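/- arXiv:2301.09848 — 3 statements merged into one kernel-verified Lean document; each statement's English description precedes it below -/
import Mathlib

section
/- (Single-step descent bound) Let L : ℝ^n → ℝ be convex with ‖∇L(θ)‖ ≤ L₀ for all θ. Let θ^1,…,θ^J ∈ ℝ^n with average θ̄ = (1/J)∑_j θ^j, let ḡ = (1/J)∑_j ∇L(θ^j), and define θ̄' = θ̄ - η ḡ. Then for any θ ∈ ℝ^n: ∑_{j=1}^J (L(θ^j) - L(θ)) ≤ (η/2) J L₀² + J (‖θ̄ - θ‖² - ‖θ̄' - θ‖²)/(2η) + L₀ ∑_{j=1}^J ‖θ^j - θ̄‖. -/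
open Finset

open scoped RealInnerProductSpace

lemma convex_grad_ineq {n : ℕ} {L : EuclideanSpace ℝ (Fin n) → ℝ}
    (hconv : ConvexOn ℝ Set.univ L) (hdiff : Differentiable ℝ L)
    (x y : EuclideanSpace ℝ (Fin n)) :
    L x - L y ≤ ⟪gradient L x, x - y⟫ := by
  rcases eq_or_ne x y with rfl | hxy
  · simp
  set φ : ℝ → ℝ := fun t => L (y + t • (x - y)) with hφ
  have hφc : ConvexOn ℝ Set.univ φ := by
    have := hconv.comp_affineMap (AffineMap.lineMap y x)
    simp only [Set.preimage_univ] at this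
    have heq : φ = L ∘ AffineMap.lineMap y x := by
      funext t
      simp [φ, AffineMap.lineMap_apply, add_comm]
    rw [heq]; exact this
  have hline : HasDerivAt (fun t : ℝ => y + t • (x - y)) (x - y) 1 := by
    simpa using ((hasDerivAt_id (1:ℝ)).smul_const (x - y)).const_add y
  have hfd : HasFDerivAt L (InnerProductSpace.toDual ℝ _ (gradient L x)) x :=
    (hasGradientAt_iff_hasFDerivAt.mp (hdiff x).hasGradientAt)
  have hpt : y + (1:ℝ) • (x - y) = x := by simp
  have hd : HasDerivAt φ (⟪gradient L x, x - y⟫) 1 := by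
    have := (hpt ▸ hfd).comp_hasDerivAt 1 hline
    simpa [InnerProductSpace.toDual_apply_apply, φ, Function.comp_def] using this
  have := hφc.slope_le_of_hasDerivAt (Set.mem_univ 0) (Set.mem_univ 1) one_pos hd
  simpa [slope, φ] using this


/-- Single-step descent bound, equation (24) of the paper. -/
theorem stmt_6 (n J : ℕ) (hJ : 0 < J)
    (L : EuclideanSpace ℝ (Fin n) → ℝ)
    (hconv : ConvexOn ℝ Set.univ L) (hdiff : Differentiable ℝ L)
    (L₀ : ℝ) (hgrad : ∀ θ, ‖gradient L θ‖ ≤ L₀)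
    (η : ℝ) (hη : 0 < η)
    (θv : Fin J → EuclideanSpace ℝ (Fin n))
    (θbar gbar θbar' : EuclideanSpace ℝ (Fin n))
    (hθbar : θbar = (J : ℝ)⁻¹ • ∑ j, θv j)
    (hgbar : gbar = (J : ℝ)⁻¹ • ∑ j, gradient L (θv j))
    (hθbar' : θbar' = θbar - η • gbar)
    (θ : EuclideanSpace ℝ (Fin n)) :
    ∑ j, (L (θv j) - L θ) ≤
      (η / 2) * J * L₀ ^ 2 + J * ((‖θbar - θ‖ ^ 2 - ‖θbar' - θ‖ ^ 2) / (2 * η))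
        + L₀ * ∑ j, ‖θv j - θbar‖ := by
  have hJR : (0:ℝ) < J := by exact_mod_cast hJ
  have hL₀ : 0 ≤ L₀ := le_trans (norm_nonneg _) (hgrad 0)
  set g : Fin J → EuclideanSpace ℝ (Fin n) := fun j => gradient L (θv j) with hg
  -- sum of gradients
  have hsum : ∑ j, g j = (J : ℝ) • gbar := by
    rw [hgbar, smul_smul, mul_inv_cancel₀ (ne_of_gt hJR), one_smul]
  -- bound on ‖gbar‖
  have hgbar_norm : ‖gbar‖ ≤ L₀ := by
    rw [hgbar]
    calc ‖(J : ℝ)⁻¹ • ∑ j, g j‖ = (J:ℝ)⁻¹ * ‖∑ j, g j‖ := by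
          rw [norm_smul]; simp [abs_of_pos (inv_pos.mpr hJR)]
      _ ≤ (J:ℝ)⁻¹ * ∑ j, ‖g j‖ := by
          gcongr; exact norm_sum_le _ _
      _ ≤ (J:ℝ)⁻¹ * ∑ _j : Fin J, L₀ := by
          gcongr with j; exact hgrad _
      _ = L₀ := by
          simp [Finset.sum_const]
          field_simp
  -- step 1: per-term bound
  have hstep : ∀ j, L (θv j) - L θ ≤ L₀ * ‖θv j - θbar‖ + ⟪g j, θbar - θ⟫ := by
    intro j
    have h1 := convex_grad_ineq hconv hdiff (θv j) θ
    have h2 : ⟪g j, θv j - θ⟫ = ⟪g j, θv j - θbar⟫ + ⟪g j, θbar - θ⟫ := by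
      rw [← inner_add_right, sub_add_sub_cancel]
    have h3 : ⟪g j, θv j - θbar⟫ ≤ L₀ * ‖θv j - θbar‖ := by
      calc ⟪g j, θv j - θbar⟫ ≤ ‖g j‖ * ‖θv j - θbar‖ := real_inner_le_norm _ _
        _ ≤ L₀ * ‖θv j - θbar‖ := by gcongr; exact hgrad _
    calc L (θv j) - L θ ≤ ⟪g j, θv j - θ⟫ := h1
      _ = ⟪g j, θv j - θbar⟫ + ⟪g j, θbar - θ⟫ := h2
      _ ≤ L₀ * ‖θv j - θbar‖ + ⟪g j, θbar - θ⟫ := by linarith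
  have hsum1 : ∑ j, (L (θv j) - L θ) ≤
      L₀ * ∑ j, ‖θv j - θbar‖ + (J : ℝ) * ⟪gbar, θbar - θ⟫ := by
    calc ∑ j, (L (θv j) - L θ)
        ≤ ∑ j, (L₀ * ‖θv j - θbar‖ + ⟪g j, θbar - θ⟫) :=
          Finset.sum_le_sum fun j _ => hstep j
      _ = L₀ * ∑ j, ‖θv j - θbar‖ + ⟪∑ j, g j, θbar - θ⟫ := by
          rw [Finset.sum_add_distrib, Finset.mul_sum, sum_inner]
      _ = L₀ * ∑ j, ‖θv j - θbar‖ + (J : ℝ) * ⟪gbar, θbar - θ⟫ := by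
          rw [hsum, real_inner_smul_left]
  -- step 2: inner product identity
  have hnorm : ‖θbar' - θ‖ ^ 2 =
      ‖θbar - θ‖ ^ 2 - 2 * η * ⟪gbar, θbar - θ⟫ + η ^ 2 * ‖gbar‖ ^ 2 := by
    have : θbar' - θ = (θbar - θ) - η • gbar := by rw [hθbar']; abel
    rw [this, norm_sub_sq_real, real_inner_smul_right, real_inner_comm]
    simp only [norm_smul, Real.norm_eq_abs, abs_of_pos hη]
    ring
  have hg2 : ‖gbar‖ ^ 2 ≤ L₀ ^ 2 := by
    have := norm_nonneg gbar
    nlinarith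
  have hkey : ⟪gbar, θbar - θ⟫ ≤
      (‖θbar - θ‖ ^ 2 - ‖θbar' - θ‖ ^ 2) / (2 * η) + (η / 2) * L₀ ^ 2 := by
    rw [div_add' _ _ _ (by positivity), le_div_iff₀ (by positivity)]
    nlinarith
  calc ∑ j, (L (θv j) - L θ)
      ≤ L₀ * ∑ j, ‖θv j - θbar‖ + (J : ℝ) * ⟪gbar, θbar - θ⟫ := hsum1
    _ ≤ L₀ * ∑ j, ‖θv j - θbar‖ +
        (J : ℝ) * ((‖θbar - θ‖ ^ 2 - ‖θbar' - θ‖ ^ 2) / (2 * η) + (η / 2) * L₀ ^ 2) := by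
        gcongr
    _ = (η / 2) * J * L₀ ^ 2 + J * ((‖θbar - θ‖ ^ 2 - ‖θbar' - θ‖ ^ 2) / (2 * η))
        + L₀ * ∑ j, ‖θv j - θbar‖ := by ring
end

section
/- (Telescoped regret bound) Under the hypotheses of the single-step descent bound applied at each t = 1,…,T with iterates θ_t^j whose averages satisfy θ̄_{t+1} = θ̄_t - η ḡ_t where ḡ_t = (1/J)∑_j ∇L_t(θ_t^j), and each L_t convex with gradient bounded by L₀: ∑_{t=1}^T ∑_{j=1}^J (L_t(θ_t^j) - L_t(θ)) ≤ (η/2) J T L₀² + J (‖θ̄_1 - θ‖² - ‖θ̄_{T+1} - θ‖²)/(2η) + L₀ ∑_{t=1}^T ∑_{j=1}^J ‖θ_t^j - θ̄_t‖. -/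
open Finset

lemma grad_convex_ineq {n : ℕ} {f : EuclideanSpace ℝ (Fin n) → ℝ}
    (hc : ConvexOn ℝ Set.univ f) (hd : Differentiable ℝ f)
    (x y : EuclideanSpace ℝ (Fin n)) :
    (inner ℝ (gradient f x) (y - x) : ℝ) ≤ f y - f x := by
  set h : ℝ → EuclideanSpace ℝ (Fin n) := fun s => x + s • (y - x) with hh
  have hde : HasDerivAt h (y - x) 0 := by
    have := ((hasDerivAt_id (0:ℝ)).smul_const (y - x)).const_add x
    rw [one_smul] at this
    exact this
  have hF : HasFDerivAt f (InnerProductSpace.toDual ℝ _ (gradient f x)) x :=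
    hasGradientAt_iff_hasFDerivAt.mp (hd x).hasGradientAt
  have h0 : h 0 = x := by simp [hh]
  have hg0 : HasDerivAt (f ∘ h) ((inner ℝ (gradient f x) (y - x) : ℝ)) 0 := by
    have hF' : HasFDerivAt f (InnerProductSpace.toDual ℝ _ (gradient f x)) (h 0) := by
      rw [h0]; exact hF
    have := hF'.comp_hasDerivAt 0 hde
    simpa using this
  have hgc : ConvexOn ℝ Set.univ (f ∘ h) := by
    have : ConvexOn ℝ ((AffineMap.lineMap x y : ℝ →ᵃ[ℝ] _) ⁻¹' Set.univ)
        (f ∘ (AffineMap.lineMap x y : ℝ →ᵃ[ℝ] _)) :=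
      hc.comp_affineMap _
    have heq : (f ∘ (AffineMap.lineMap x y : ℝ →ᵃ[ℝ] _)) = f ∘ h := by
      funext s
      simp [hh, AffineMap.lineMap_apply, Function.comp]
      congr 1
      module
    rw [heq] at this
    simpa using this
  have hs := hgc.le_slope_of_hasDerivAt (Set.mem_univ 0) (Set.mem_univ (1:ℝ))
    one_pos hg0
  have h1 : h 1 = y := by simp [hh]
  rw [slope_def_field] at hs
  simpa [h0, h1, Function.comp] using hs

lemma step_bound {n J : ℕ} (hJ : 0 < J) {f : EuclideanSpace ℝ (Fin n) → ℝ}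
    (hc : ConvexOn ℝ Set.univ f) (hd : Differentiable ℝ f)
    {L₀ : ℝ} (hgrad : ∀ θ, ‖gradient f θ‖ ≤ L₀)
    {η : ℝ} (hη : 0 < η)
    (x : Fin J → EuclideanSpace ℝ (Fin n)) (b b' θ : EuclideanSpace ℝ (Fin n))
    (hstep : b' = b - η • ((J : ℝ)⁻¹ • ∑ j, gradient f (x j))) :
    ∑ j, (f (x j) - f θ) ≤
      (η / 2) * J * L₀ ^ 2 + J * ((‖b - θ‖ ^ 2 - ‖b' - θ‖ ^ 2) / (2 * η))
        + L₀ * ∑ j, ‖x j - b‖ := by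
  have hL₀ : 0 ≤ L₀ := le_trans (norm_nonneg _) (hgrad 0)
  set g : EuclideanSpace ℝ (Fin n) := (J : ℝ)⁻¹ • ∑ j, gradient f (x j) with hg
  set a : EuclideanSpace ℝ (Fin n) := b - θ with ha
  have hJR : (0:ℝ) < J := by exact_mod_cast hJ
  -- norm of average gradient
  have hgn : ‖g‖ ≤ L₀ := by
    rw [hg, norm_smul]
    calc ‖((J:ℝ)⁻¹)‖ * ‖∑ j, gradient f (x j)‖
        ≤ (J:ℝ)⁻¹ * ∑ j, ‖gradient f (x j)‖ := by
          rw [Real.norm_eq_abs, abs_of_nonneg (by positivity)]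
          gcongr
          exact norm_sum_le _ _
      _ ≤ (J:ℝ)⁻¹ * ∑ _j : Fin J, L₀ := by
          gcongr with j
          exact hgrad _
      _ = L₀ := by
          simp [Finset.sum_const]
          field_simp
  -- key identity
  have hb' : b' - θ = a - η • g := by rw [hstep, ha]; abel
  have hkey : (inner ℝ g a : ℝ) =
      (‖a‖ ^ 2 - ‖b' - θ‖ ^ 2) / (2 * η) + (η / 2) * ‖g‖ ^ 2 := by
    rw [hb']
    have hexp : ‖a - η • g‖ ^ 2
        = ‖a‖ ^ 2 - 2 * (η * inner ℝ a g) + η ^ 2 * ‖g‖ ^ 2 := by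
      rw [norm_sub_sq_real, real_inner_smul_right, norm_smul]
      rw [Real.norm_eq_abs, abs_of_nonneg hη.le]
      ring
    rw [hexp, real_inner_comm g a]
    field_simp
    ring
  have hinnerbound : (inner ℝ g a : ℝ)
      ≤ (‖a‖ ^ 2 - ‖b' - θ‖ ^ 2) / (2 * η) + (η / 2) * L₀ ^ 2 := by
    rw [hkey]
    have h1 : ‖g‖ ^ 2 ≤ L₀ ^ 2 := pow_le_pow_left₀ (norm_nonneg _) hgn 2
    have h2 : (η / 2) * ‖g‖ ^ 2 ≤ (η / 2) * L₀ ^ 2 :=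
      mul_le_mul_of_nonneg_left h1 (by positivity)
    linarith
  -- per-j bound
  have hper : ∀ j, f (x j) - f θ ≤
      (inner ℝ (gradient f (x j)) a : ℝ) + L₀ * ‖x j - b‖ := by
    intro j
    have h1 : (inner ℝ (gradient f (x j)) (θ - x j) : ℝ) ≤ f θ - f (x j) :=
      grad_convex_ineq hc hd (x j) θ
    have h2 : (inner ℝ (gradient f (x j)) (x j - θ) : ℝ)
        = (inner ℝ (gradient f (x j)) a : ℝ) + inner ℝ (gradient f (x j)) (x j - b) := by
      rw [← inner_add_right]
      congr 1
      rw [ha]; abel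
    have h3 : (inner ℝ (gradient f (x j)) (x j - b) : ℝ) ≤ L₀ * ‖x j - b‖ := by
      calc (inner ℝ (gradient f (x j)) (x j - b) : ℝ)
          ≤ ‖gradient f (x j)‖ * ‖x j - b‖ := real_inner_le_norm _ _
        _ ≤ L₀ * ‖x j - b‖ := by gcongr; exact hgrad _
    have h4 : f (x j) - f θ ≤ (inner ℝ (gradient f (x j)) (x j - θ) : ℝ) := by
      have : (inner ℝ (gradient f (x j)) (θ - x j) : ℝ)
          = -(inner ℝ (gradient f (x j)) (x j - θ) : ℝ) := by
        rw [← inner_neg_right]; congr 1; abel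
      linarith [h1, this ▸ h1]
    linarith [h4, h2 ▸ h4, h3]
  calc ∑ j, (f (x j) - f θ)
      ≤ ∑ j, ((inner ℝ (gradient f (x j)) a : ℝ) + L₀ * ‖x j - b‖) :=
        Finset.sum_le_sum fun j _ => hper j
    _ = (inner ℝ (∑ j, gradient f (x j)) a : ℝ) + L₀ * ∑ j, ‖x j - b‖ := by
        rw [Finset.sum_add_distrib, sum_inner, Finset.mul_sum]
    _ = (J : ℝ) * (inner ℝ g a : ℝ) + L₀ * ∑ j, ‖x j - b‖ := by
        rw [hg, real_inner_smul_left]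
        field_simp
    _ ≤ (J : ℝ) * ((‖a‖ ^ 2 - ‖b' - θ‖ ^ 2) / (2 * η) + (η / 2) * L₀ ^ 2)
          + L₀ * ∑ j, ‖x j - b‖ := by
        gcongr
    _ = (η / 2) * J * L₀ ^ 2 + J * ((‖b - θ‖ ^ 2 - ‖b' - θ‖ ^ 2) / (2 * η))
          + L₀ * ∑ j, ‖x j - b‖ := by
        rw [ha]; ring

/-- Telescoped regret bound, equation (25) of the paper. -/
theorem stmt_7 (n J T : ℕ) (hJ : 0 < J) (hT : 0 < T)
    (L : ℕ → EuclideanSpace ℝ (Fin n) → ℝ)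
    (hconv : ∀ t, ConvexOn ℝ Set.univ (L t)) (hdiff : ∀ t, Differentiable ℝ (L t))
    (L₀ : ℝ) (hgrad : ∀ t θ, ‖gradient (L t) θ‖ ≤ L₀)
    (η : ℝ) (hη : 0 < η)
    (θv : ℕ → Fin J → EuclideanSpace ℝ (Fin n))
    (θbar : ℕ → EuclideanSpace ℝ (Fin n))
    (hθbar : ∀ t, θbar t = (J : ℝ)⁻¹ • ∑ j, θv t j)
    (hstep : ∀ t, θbar (t + 1) =
      θbar t - η • ((J : ℝ)⁻¹ • ∑ j, gradient (L t) (θv t j)))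
    (θ : EuclideanSpace ℝ (Fin n)) :
    ∑ t ∈ range T, ∑ j, (L t (θv t j) - L t θ) ≤
      (η / 2) * J * T * L₀ ^ 2
        + J * ((‖θbar 0 - θ‖ ^ 2 - ‖θbar T - θ‖ ^ 2) / (2 * η))
        + L₀ * ∑ t ∈ range T, ∑ j, ‖θv t j - θbar t‖ := by
  have hstepb : ∀ t, ∑ j, (L t (θv t j) - L t θ) ≤
      (η / 2) * J * L₀ ^ 2
        + J * ((‖θbar t - θ‖ ^ 2 - ‖θbar (t+1) - θ‖ ^ 2) / (2 * η))
        + L₀ * ∑ j, ‖θv t j - θbar t‖ := fun t =>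
    step_bound hJ (hconv t) (hdiff t) (hgrad t) hη (θv t) (θbar t) (θbar (t+1)) θ (hstep t)
  calc ∑ t ∈ range T, ∑ j, (L t (θv t j) - L t θ)
      ≤ ∑ t ∈ range T, ((η / 2) * J * L₀ ^ 2
        + J * ((‖θbar t - θ‖ ^ 2 - ‖θbar (t+1) - θ‖ ^ 2) / (2 * η))
        + L₀ * ∑ j, ‖θv t j - θbar t‖) := Finset.sum_le_sum fun t _ => hstepb t
    _ = (T : ℝ) * ((η / 2) * J * L₀ ^ 2)
        + J * ((∑ t ∈ range T, (‖θbar t - θ‖ ^ 2 - ‖θbar (t+1) - θ‖ ^ 2)) / (2 * η))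
        + L₀ * ∑ t ∈ range T, ∑ j, ‖θv t j - θbar t‖ := by
        rw [Finset.sum_add_distrib, Finset.sum_add_distrib, Finset.sum_const,
          Finset.card_range, nsmul_eq_mul, ← Finset.mul_sum, ← Finset.sum_div,
          ← Finset.mul_sum]
    _ = _ := by
        rw [Finset.sum_range_sub' (fun t => ‖θbar t - θ‖ ^ 2)]
        ring
end

section
/- (QSGD quantizer variance bound, per coordinate construction) Let v ∈ ℝ^n be nonzero, M ≥ 1 an integer, and for each coordinate i define the random variable Q(v)_i = ‖v‖ · sign(v_i) · ξ_i where, with l = ⌊M|v_i|/‖v‖⌋, ξ_i equals l/M with probability 1 - (M|v_i|/‖v‖ - l) and (l+1)/M otherwise, independently across coordinates. Then E[Q(v)] = v and E‖Q(v) - v‖² ≤ min(n/M², √n/M) · ‖v‖². -/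
open MeasureTheory Finset

lemma two_point {Ω : Type*} [MeasurableSpace Ω] (μ : Measure Ω) [IsProbabilityMeasure μ]
    (ξ : Ω → ℝ) (hξ : Measurable ξ) (a b p : ℝ) (hab : a ≠ b) (hp0 : 0 ≤ p) (hp1 : p ≤ 1)
    (hA : μ {ω | ξ ω = a} = ENNReal.ofReal (1 - p))
    (hB : μ {ω | ξ ω = b} = ENNReal.ofReal p) (g : ℝ → ℝ) :
    Integrable (fun ω => g (ξ ω)) μ ∧
      ∫ ω, g (ξ ω) ∂μ = (1 - p) * g a + p * g b := by
  set A : Set Ω := {ω | ξ ω = a} with hAdef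
  set B : Set Ω := {ω | ξ ω = b} with hBdef
  have hmA : MeasurableSet A := hξ (measurableSet_singleton a)
  have hmB : MeasurableSet B := hξ (measurableSet_singleton b)
  have hunion : μ (A ∪ B) = 1 := by
    have hdisj : Disjoint A B := by
      rw [Set.disjoint_left]
      intro ω h1 h2
      exact hab (h1.symm.trans h2)
    rw [measure_union hdisj hmB, hA, hB, ← ENNReal.ofReal_add (by linarith) hp0]
    norm_num
  have hae : ∀ᵐ ω ∂μ, ω ∈ A ∪ B := by
    rw [ae_iff]
    have : {ω | ¬ ω ∈ A ∪ B} = (A ∪ B)ᶜ := rfl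
    rw [this, measure_compl (hmA.union hmB) (measure_ne_top μ _), hunion,
      measure_univ, tsub_self]
  have haeq : (fun ω => g (ξ ω)) =ᵐ[μ]
      (A.indicator (fun _ => g a) + B.indicator (fun _ => g b)) := by
    filter_upwards [hae] with ω hω
    rcases hω with h | h
    · have h' : ξ ω = a := h
      have hnB : ω ∉ B := by simp [hBdef, h', hab]
      simp [Set.indicator_of_mem h, Set.indicator_of_notMem hnB]
      simp [h']
    · have h' : ξ ω = b := h
      have hnA : ω ∉ A := by
        simp only [hAdef, Set.mem_setOf_eq, h']
        exact fun hc => hab hc.symm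
      simp [Set.indicator_of_mem h, Set.indicator_of_notMem hnA]
      simp [h']
  have hintA : Integrable (A.indicator (fun _ => g a)) μ :=
    (integrable_const (g a)).indicator hmA
  have hintB : Integrable (B.indicator (fun _ => g b)) μ :=
    (integrable_const (g b)).indicator hmB
  have hint : Integrable (fun ω => g (ξ ω)) μ := (hintA.add hintB).congr haeq.symm
  refine ⟨hint, ?_⟩
  rw [integral_congr_ae haeq]
  simp only [Pi.add_apply]
  rw [integral_add hintA hintB,
    integral_indicator_const _ hmA, integral_indicator_const _ hmB,
    measureReal_def, measureReal_def, hA, hB, ENNReal.toReal_ofReal (by linarith), ENNReal.toReal_ofReal hp0]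
  simp only [smul_eq_mul]
  try ring

lemma real_sign_mul_abs (r : ℝ) : Real.sign r * |r| = r := by
  rcases lt_trichotomy r 0 with h | h | h
  · rw [Real.sign_of_neg h, abs_of_neg h]; ring
  · simp [h]
  · rw [Real.sign_of_pos h, abs_of_pos h]; ring

/-- QSGD quantizer (Alistarh et al., Lemma 3.1): unbiasedness and variance bound. -/
theorem stmt_9 (n : ℕ) (hn : 0 < n) (M : ℕ) (hM : 1 ≤ M)
    (v : Fin n → ℝ) (hv : v ≠ 0)
    {Ω : Type*} [MeasurableSpace Ω] (μ : Measure Ω) [IsProbabilityMeasure μ]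
    (ξ : Fin n → Ω → ℝ) (hmeas : ∀ i, Measurable (ξ i))
    (hlow : ∀ i,
      μ {ω | ξ i ω = (⌊(M : ℝ) * |v i| / Real.sqrt (∑ k, v k ^ 2)⌋ : ℝ) / M} =
        ENNReal.ofReal (1 - ((M : ℝ) * |v i| / Real.sqrt (∑ k, v k ^ 2)
          - ⌊(M : ℝ) * |v i| / Real.sqrt (∑ k, v k ^ 2)⌋)))
    (hhigh : ∀ i,
      μ {ω | ξ i ω = ((⌊(M : ℝ) * |v i| / Real.sqrt (∑ k, v k ^ 2)⌋ : ℝ) + 1) / M} =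
        ENNReal.ofReal ((M : ℝ) * |v i| / Real.sqrt (∑ k, v k ^ 2)
          - ⌊(M : ℝ) * |v i| / Real.sqrt (∑ k, v k ^ 2)⌋)) :
    (∀ i, ∫ ω, Real.sqrt (∑ k, v k ^ 2) * Real.sign (v i) * ξ i ω ∂μ = v i) ∧
      ∫ ω, ∑ i, (Real.sqrt (∑ k, v k ^ 2) * Real.sign (v i) * ξ i ω - v i) ^ 2 ∂μ ≤
        min ((n : ℝ) / M ^ 2) (Real.sqrt n / M) * (∑ k, v k ^ 2) := by
  set S : ℝ := ∑ k, v k ^ 2 with hSdef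
  set s : ℝ := Real.sqrt S with hsdef
  have hSpos : 0 < S := by
    obtain ⟨j, hj⟩ : ∃ j, v j ≠ 0 := by
      by_contra h
      push_neg at h
      exact hv (funext h)
    exact Finset.sum_pos' (fun i _ => sq_nonneg _) ⟨j, Finset.mem_univ j, by positivity⟩
  have hspos : 0 < s := Real.sqrt_pos.2 hSpos
  have hs2 : s ^ 2 = S := Real.sq_sqrt hSpos.le
  have hM0 : (0 : ℝ) < M := by exact_mod_cast Nat.lt_of_lt_of_le Nat.zero_lt_one hM
  set x : Fin n → ℝ := fun i => (M : ℝ) * |v i| / s with hxdef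
  set l : Fin n → ℝ := fun i => (⌊x i⌋ : ℝ) with hldef
  set p : Fin n → ℝ := fun i => x i - l i with hpdef
  have hx0 : ∀ i, 0 ≤ x i := fun i => by positivity
  have hl0 : ∀ i, 0 ≤ l i := fun i => by
    have := Int.floor_nonneg.2 (hx0 i)
    simp only [hldef]
    exact_mod_cast this
  have hp0 : ∀ i, 0 ≤ p i := fun i => by
    have := Int.floor_le (x i)
    simp only [hpdef, hldef]
    linarith
  have hp1 : ∀ i, p i ≤ 1 := fun i => by
    have := Int.lt_floor_add_one (x i)
    simp only [hpdef, hldef]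
    push_cast
    linarith
  have hab : ∀ i, l i / M ≠ (l i + 1) / M := fun i h => by
    rw [div_eq_div_iff hM0.ne' hM0.ne'] at h
    nlinarith
  have habs : ∀ i, |v i| = x i * s / M := fun i => by
    field_simp [hxdef]
    show |v i| * M = M * |v i| / s * s
    rw [div_mul_cancel₀ _ hspos.ne']; ring
  -- unbiasedness
  have hmean : ∀ i, ∫ ω, s * Real.sign (v i) * ξ i ω ∂μ = v i := by
    intro i
    obtain ⟨-, hInt⟩ := two_point μ (ξ i) (hmeas i) (l i / M) ((l i + 1) / M) (p i)
      (hab i) (hp0 i) (hp1 i) (hlow i) (hhigh i) (fun t => s * Real.sign (v i) * t)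
    have hxi : x i = l i + p i := by simp [hpdef]
    have hv' : v i = Real.sign (v i) * ((l i + p i) * s / M) := by
      rw [← hxi, ← habs i]
      exact (real_sign_mul_abs (v i)).symm
    rw [hInt]
    linear_combination -hv'
  -- per-coordinate variance
  have hvar : ∀ i, Integrable (fun ω => (s * Real.sign (v i) * ξ i ω - v i) ^ 2) μ ∧
      ∫ ω, (s * Real.sign (v i) * ξ i ω - v i) ^ 2 ∂μ = p i * (1 - p i) * s ^ 2 / M ^ 2 := by
    intro i
    obtain ⟨hI, hInt⟩ := two_point μ (ξ i) (hmeas i) (l i / M) ((l i + 1) / M) (p i)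
      (hab i) (hp0 i) (hp1 i) (hlow i) (hhigh i)
      (fun t => (s * Real.sign (v i) * t - v i) ^ 2)
    refine ⟨hI, ?_⟩
    rw [hInt]
    by_cases hvi : v i = 0
    · have hxz : x i = 0 := by simp [hxdef, hvi]
      have hlz : l i = 0 := by simp [hldef, hxdef, hvi]
      have hpz : p i = 0 := by simp [hpdef, hlz, hxz]
      simp [hvi, hxz, hlz, hpz, Real.sign_zero]
    · have hσ : Real.sign (v i) = 1 ∨ Real.sign (v i) = -1 := by
        rcases lt_or_gt_of_ne hvi with h | h
        · right; exact Real.sign_of_neg h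
        · left; exact Real.sign_of_pos h
      have hσ2 : Real.sign (v i) ^ 2 = 1 := by rcases hσ with h | h <;> rw [h] <;> norm_num
      have hxi : x i = l i + p i := by simp [hpdef]
      have hvi' : v i = Real.sign (v i) * ((l i + p i) * s / M) := by
        rw [← hxi, ← habs i]
        exact (real_sign_mul_abs (v i)).symm
      linear_combination (v i - Real.sign (v i) * ((l i + p i) * s / (M:ℝ))) * hvi' +
        (p i * (1 - p i) * s ^ 2 / (M:ℝ) ^ 2) * hσ2
  -- sum up
  have hsum : ∫ ω, ∑ i, (s * Real.sign (v i) * ξ i ω - v i) ^ 2 ∂μ =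
      ∑ i, p i * (1 - p i) * s ^ 2 / M ^ 2 := by
    rw [integral_finset_sum _ (fun i _ => (hvar i).1)]
    exact Finset.sum_congr rfl fun i _ => (hvar i).2
  refine ⟨hmean, ?_⟩
  rw [hsum]
  have hSM : 0 ≤ S / (M : ℝ) ^ 2 := by positivity
  rw [min_mul_of_nonneg _ _ hSpos.le]
  refine le_min ?_ ?_
  · calc ∑ i, p i * (1 - p i) * s ^ 2 / M ^ 2 ≤ ∑ _i : Fin n, S / (M:ℝ) ^ 2 := by
          refine Finset.sum_le_sum fun i _ => ?_
          rw [← hs2]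
          have h1 : p i * (1 - p i) ≤ 1 := by nlinarith [hp0 i, hp1 i]
          have h2 : (0:ℝ) ≤ s ^ 2 / M ^ 2 := by positivity
          calc p i * (1 - p i) * s ^ 2 / M ^ 2 = (p i * (1 - p i)) * (s ^ 2 / M ^ 2) := by ring
            _ ≤ 1 * (s ^ 2 / M ^ 2) := mul_le_mul_of_nonneg_right h1 h2
            _ = s ^ 2 / M ^ 2 := one_mul _
      _ = (n : ℝ) / M ^ 2 * S := by
          rw [Finset.sum_const, Finset.card_univ, Fintype.card_fin, nsmul_eq_mul]
          ring
  · -- Cauchy-Schwarz route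
    have hCS : ∑ i, |v i| ≤ Real.sqrt n * s := by
      have h1 : (∑ i, |v i|) ^ 2 ≤ (n : ℝ) * ∑ i, |v i| ^ 2 := by
        simpa using sq_sum_le_card_mul_sum_sq (s := Finset.univ) (f := fun i => |v i|)
      have h2 : ∑ i, |v i| ^ 2 = S := by
        simp [hSdef, sq_abs]
      rw [h2] at h1
      have h3 : (0:ℝ) ≤ ∑ i, |v i| := Finset.sum_nonneg fun i _ => abs_nonneg _
      have h4 : Real.sqrt n * s = Real.sqrt ((n : ℝ) * S) := by
        rw [Real.sqrt_mul (Nat.cast_nonneg n)]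
      nlinarith [Real.sq_sqrt (show (0:ℝ) ≤ (n:ℝ) * S by positivity),
        Real.sqrt_nonneg ((n:ℝ) * S), sq_nonneg (∑ i, |v i| - Real.sqrt ((n:ℝ) * S))]
    have hpx : ∑ i, p i * (1 - p i) ≤ (M : ℝ) * Real.sqrt n := by
      have h1 : ∀ i, p i * (1 - p i) ≤ x i := fun i => by
        have := hl0 i
        have := hp0 i
        have := hp1 i
        simp only [hpdef] at *
        nlinarith
      calc ∑ i, p i * (1 - p i) ≤ ∑ i, x i := Finset.sum_le_sum fun i _ => h1 i
        _ = (M : ℝ) / s * ∑ i, |v i| := by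
            rw [Finset.mul_sum]
            exact Finset.sum_congr rfl fun i _ => by rw [hxdef]; ring
        _ ≤ (M : ℝ) / s * (Real.sqrt n * s) := by
            apply mul_le_mul_of_nonneg_left hCS (by positivity)
        _ = (M : ℝ) * Real.sqrt n := by field_simp
    calc ∑ i, p i * (1 - p i) * s ^ 2 / M ^ 2
        = (∑ i, p i * (1 - p i)) * (s ^ 2 / M ^ 2) := by rw [Finset.sum_mul]; exact Finset.sum_congr rfl fun i _ => by ring
      _ ≤ (M : ℝ) * Real.sqrt n * (s ^ 2 / M ^ 2) := mul_le_mul_of_nonneg_right hpx (by positivity)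
      _ = Real.sqrt n / M * S := by rw [← hs2]; field_simp
end
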